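/- Let W(x,y) be a homogeneous polynomial of degree n belonging to the subalgebra of ℂ[x,y] generated by W_H8(x,y) = x^8 + 14 x^4 y^4 + y^8 and W_12(x,y) = x^{12} - 33 x^8 y^4 - 33 x^4 y^8 + y^{12}, of the form W(x,y) = x^n + Σ_{i=d}^{n} A_i x^{n-i} y^i with A_d ≠ 0, and satisfying W((x+y)/√2, (x-y)/√2) = -W(x,y) identically. Then d ≤ 4⌊(n-12)/24⌋ + 4, where ⌊x⌋ is the greatest integer not exceeding x. -/

import Mathlib

/-- The weight enumerator of the extended Hamming code,
`W_{H₈}(x,y) = x⁸ + 14x⁴y⁴ + y⁸`, as a two-variable polynomial function. -/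
def WH8 : ℂ → ℂ → ℂ := fun x y => x ^ 8 + 14 * x ^ 4 * y ^ 4 + y ^ 8

/-- Ozeki's formal weight enumerator
`W₁₂(x,y) = x¹² - 33x⁸y⁴ - 33x⁴y⁸ + y¹²`, as a two-variable polynomial function. -/
def W12 : ℂ → ℂ → ℂ := fun x y =>
  x ^ 12 - 33 * x ^ 8 * y ^ 4 - 33 * x ^ 4 * y ^ 8 + y ^ 12


noncomputable section
namespace MSBaux
open PowerSeries

/-- geometric series in `X^4` -/
def B1 : PowerSeries ℂ := PowerSeries.mk fun k => if 4 ∣ k then 1 else 0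

def Hs : PowerSeries ℂ := 1 + 14 * X ^ 4 + X ^ 8
def Ws : PowerSeries ℂ := 1 - 33 * X ^ 4 - 33 * X ^ 8 + X ^ 12

lemma b1 : ((1 : PowerSeries ℂ) - X ^ 4) * B1 = 1 := by
  ext k
  rw [sub_mul, one_mul, map_sub]
  rcases lt_or_ge k 4 with hk | hk
  · rw [PowerSeries.coeff_X_pow_mul' B1 4 k, if_neg (by omega)]
    interval_cases k <;> simp [B1, PowerSeries.coeff_mk, PowerSeries.coeff_one] <;> norm_num
  · obtain ⟨j, rfl⟩ : ∃ j, k = j + 4 := ⟨k - 4, by omega⟩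
    rw [PowerSeries.coeff_X_pow_mul B1 4 j]
    have h4 : (4 ∣ j + 4) ↔ (4 ∣ j) := by omega
    simp only [B1, PowerSeries.coeff_mk, PowerSeries.coeff_one, h4]
    have : j + 4 ≠ 0 := by omega
    split <;> simp_all


lemma dHs : d⁄dX ℂ Hs = 56 * X ^ 3 + 8 * X ^ 7 := by
  have h14 : (14 : PowerSeries ℂ) = C 14 := (map_ofNat (C (R := ℂ)) 14).symm
  rw [Hs, map_add, map_add, h14, Derivation.leibniz]
  rw [Derivation.leibniz_pow, Derivation.leibniz_pow]
  simp only [derivative_X, derivative_C, Derivation.map_one_eq_zero, smul_eq_mul,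
    nsmul_eq_mul]
  rw [← h14]
  push_cast
  ring

lemma dB1 : d⁄dX ℂ B1 = 4 * X ^ 3 * B1 ^ 2 := by
  have h := congrArg (d⁄dX ℂ) b1
  rw [Derivation.leibniz, Derivation.map_one_eq_zero, map_sub,
    Derivation.map_one_eq_zero, Derivation.leibniz_pow, derivative_X] at h
  simp only [smul_eq_mul, nsmul_eq_mul, zero_sub, mul_one] at h
  -- h : (1 - X^4) * d B1 + B1 * -(4 * X^3) = 0  (roughly)
  have h2 : (1 - X ^ 4) * (d⁄dX ℂ B1) = 4 * X ^ 3 * B1 := by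
    push_cast at h
    linear_combination h
  have h3 := congrArg (fun u => B1 * u) h2
  calc d⁄dX ℂ B1 = ((1 - X ^ 4) * B1) * (d⁄dX ℂ B1) := by rw [b1, one_mul]
  _ = B1 * ((1 - X ^ 4) * (d⁄dX ℂ B1)) := by ring
  _ = B1 * (4 * X ^ 3 * B1) := by rw [h2]
  _ = 4 * X ^ 3 * B1 ^ 2 := by ring


lemma keyident (k : ℕ) :
    ((4 * k + 4 : ℕ) : PowerSeries ℂ) * (X ^ 3 * Ws * Hs ^ (3 * k + 2) * B1 ^ (4 * k + 5)) =
      ((4 * k + 4 : ℕ) : PowerSeries ℂ) * X ^ 3 * Hs ^ (3 * k + 3) * B1 ^ (4 * k + 4)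
        - X ^ 4 * (d⁄dX ℂ (Hs ^ (3 * k + 3) * B1 ^ (4 * k + 4))) := by
  have hD : d⁄dX ℂ (Hs ^ (3 * k + 3) * B1 ^ (4 * k + 4)) =
      ((3 * k + 3 : ℕ) : PowerSeries ℂ) * Hs ^ (3 * k + 2) * (56 * X ^ 3 + 8 * X ^ 7)
          * B1 ^ (4 * k + 4)
        + ((4 * k + 4 : ℕ) : PowerSeries ℂ) * Hs ^ (3 * k + 3) * B1 ^ (4 * k + 3)
          * (4 * X ^ 3 * B1 ^ 2) := by
    rw [Derivation.leibniz, Derivation.leibniz_pow, Derivation.leibniz_pow, dHs, dB1]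
    simp only [smul_eq_mul, nsmul_eq_mul]
    rw [show 3 * k + 3 - 1 = 3 * k + 2 by omega, show 4 * k + 4 - 1 = 4 * k + 3 by omega]
    ring
  rw [hD, Hs, Ws]
  push_cast
  linear_combination ((1 + 14 * X ^ 4 + X ^ 8) ^ (3 * k + 2) * B1 ^ (4 * k + 4)
      * (((k : PowerSeries ℂ)) + 1)
      * (4 * X ^ 3 * (1 + 14 * X ^ 4 + X ^ 8) - 3 * X ^ 4 * (56 * X ^ 3 + 8 * X ^ 7))) * b1

lemma base (k : ℕ) : PowerSeries.coeff (4 * k + 7)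
    (X ^ 3 * Ws * Hs ^ (3 * k + 2) * B1 ^ (4 * k + 5)) = 0 := by
  have hcast : ((4 * k + 4 : ℕ) : PowerSeries ℂ) = C ((4 * k + 4 : ℕ) : ℂ) :=
    (map_natCast (C (R := ℂ)) _).symm
  have h := congrArg (PowerSeries.coeff (4 * k + 7)) (keyident k)
  rw [hcast] at h
  rw [show (C ((4 * k + 4 : ℕ) : ℂ)) * (X ^ 3 * Ws * Hs ^ (3 * k + 2) * B1 ^ (4 * k + 5))
      = C ((4 * k + 4 : ℕ) : ℂ) * (X ^ 3 * (Ws * Hs ^ (3 * k + 2) * B1 ^ (4 * k + 5)))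
      by ring] at h
  rw [show (C ((4 * k + 4 : ℕ) : ℂ)) * X ^ 3 * Hs ^ (3 * k + 3) * B1 ^ (4 * k + 4)
      = C ((4 * k + 4 : ℕ) : ℂ) * (X ^ 3 * (Hs ^ (3 * k + 3) * B1 ^ (4 * k + 4)))
      by ring] at h
  rw [map_sub, PowerSeries.coeff_C_mul, PowerSeries.coeff_C_mul,
    show 4 * k + 7 = (4 * k + 4) + 3 by omega,
    PowerSeries.coeff_X_pow_mul _ 3 (4 * k + 4),
    PowerSeries.coeff_X_pow_mul _ 3 (4 * k + 4),
    show (4 * k + 4) + 3 = (4 * k + 3) + 4 by omega,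
    PowerSeries.coeff_X_pow_mul _ 4 (4 * k + 3),
    PowerSeries.coeff_derivative] at h
  have hc : ((4 * k + 4 : ℕ) : ℂ) ≠ 0 := Nat.cast_ne_zero.mpr (by omega)
  rw [show X ^ 3 * Ws * Hs ^ (3 * k + 2) * B1 ^ (4 * k + 5)
      = X ^ 3 * (Ws * Hs ^ (3 * k + 2) * B1 ^ (4 * k + 5)) by ring,
    show 4 * k + 7 = (4 * k + 4) + 3 by omega,
    PowerSeries.coeff_X_pow_mul _ 3 (4 * k + 4)]
  have hcc : ((4 * k + 3 : ℕ) : ℂ) + 1 = ((4 * k + 4 : ℕ) : ℂ) := by push_cast; ring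
  rw [hcc] at h
  have h0 : ((4 * k + 4 : ℕ) : ℂ)
      * PowerSeries.coeff (4 * k + 4) (Ws * Hs ^ (3 * k + 2) * B1 ^ (4 * k + 5)) = 0 := by
    rw [h]; ring
  exact (mul_eq_zero.mp h0).resolve_left hc


lemma kill (s : ℕ) : ∀ k : ℕ, PowerSeries.coeff (4 * (s + k) + 7)
    (X ^ 3 * Ws ^ (2 * s + 1) * Hs ^ (3 * k + 2) * B1 ^ (4 * (s + k) + 5)) = 0 := by
  induction s with
  | zero =>
    intro k
    have := base k
    rw [show 2 * 0 + 1 = 1 by norm_num, pow_one]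
    rw [show 4 * (0 + k) + 7 = 4 * k + 7 by omega, show 4 * (0 + k) + 5 = 4 * k + 5 by omega]
    exact this
  | succ s ih =>
    intro k
    have hb4 : ((1 : PowerSeries ℂ) - X ^ 4) ^ 4 * B1 ^ 4 = 1 := by
      rw [← mul_pow, b1, one_pow]
    have hW2 : Ws ^ 2 = Hs ^ 3 - 108 * X ^ 4 * (1 - X ^ 4) ^ 4 := by
      rw [Hs, Ws]; ring
    have split : X ^ 3 * Ws ^ (2 * (s + 1) + 1) * Hs ^ (3 * k + 2) * B1 ^ (4 * (s + 1 + k) + 5)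
        = X ^ 3 * Ws ^ (2 * s + 1) * Hs ^ (3 * (k + 1) + 2) * B1 ^ (4 * (s + (k + 1)) + 5)
          - 108 * (X ^ 4 *
            (X ^ 3 * Ws ^ (2 * s + 1) * Hs ^ (3 * k + 2) * B1 ^ (4 * (s + k) + 5))) := by
      have e1 : Ws ^ (2 * (s + 1) + 1) = Ws ^ (2 * s + 1) * Ws ^ 2 := by
        rw [← pow_add]; ring_nf
      rw [e1, hW2]
      linear_combination (-(108 : PowerSeries ℂ) * X ^ 7 * Ws ^ (2 * s + 1) * Hs ^ (3 * k + 2)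
        * B1 ^ (4 * (s + k) + 5)) * hb4
    rw [show 4 * (s + 1 + k) + 7 = 4 * (s + (k + 1)) + 7 by omega, split, map_sub]
    have t1 : PowerSeries.coeff (4 * (s + (k + 1)) + 7)
        (X ^ 3 * Ws ^ (2 * s + 1) * Hs ^ (3 * (k + 1) + 2) * B1 ^ (4 * (s + (k + 1)) + 5))
        = 0 := ih (k + 1)
    have t2 : PowerSeries.coeff (4 * (s + (k + 1)) + 7)
        (108 * (X ^ 4 * (X ^ 3 * Ws ^ (2 * s + 1) * Hs ^ (3 * k + 2)
          * B1 ^ (4 * (s + k) + 5)))) = 0 := by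
      rw [show (108 : PowerSeries ℂ) * (X ^ 4 * (X ^ 3 * Ws ^ (2 * s + 1) * Hs ^ (3 * k + 2)
          * B1 ^ (4 * (s + k) + 5))) = X ^ 4 * (C 108 * (X ^ 3 * Ws ^ (2 * s + 1)
          * Hs ^ (3 * k + 2) * B1 ^ (4 * (s + k) + 5))) by
            rw [show (C (R := ℂ)) (108 : ℂ) = (108 : PowerSeries ℂ) from map_ofNat (C (R := ℂ)) 108]; ring,
        show 4 * (s + (k + 1)) + 7 = (4 * (s + k) + 7) + 4 by omega,
        PowerSeries.coeff_X_pow_mul _ 4 _, PowerSeries.coeff_C_mul, ih k, mul_zero]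
    rw [t1, t2, sub_zero]


def B1R : PowerSeries ℝ := PowerSeries.mk fun k => if 4 ∣ k then 1 else 0
def HsR : PowerSeries ℝ := 1 + 14 * X ^ 4 + X ^ 8

lemma map_B1R : PowerSeries.map (algebraMap ℝ ℂ) B1R = B1 := by
  ext k
  simp [B1R, B1, PowerSeries.coeff_map, apply_ite]

lemma map_HsR : PowerSeries.map (algebraMap ℝ ℂ) HsR = Hs := by
  simp only [HsR, Hs, map_add, map_mul, map_pow, map_one, map_ofNat, PowerSeries.map_X]

def NN (u : PowerSeries ℝ) : Prop := ∀ j, 0 ≤ PowerSeries.coeff j u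

lemma NN_mul {u v : PowerSeries ℝ} (hu : NN u) (hv : NN v) : NN (u * v) := by
  intro j
  rw [PowerSeries.coeff_mul]
  exact Finset.sum_nonneg fun p _ => mul_nonneg (hu p.1) (hv p.2)

lemma NN_pow {u : PowerSeries ℝ} (hu : NN u) (n : ℕ) : NN (u ^ n) := by
  induction n with
  | zero =>
    intro j
    rw [pow_zero]
    rcases Nat.eq_zero_or_pos j with h | h
    · subst h; simp
    · rw [PowerSeries.coeff_one, if_neg (by omega)]
  | succ n ih =>
    rw [pow_succ]
    exact NN_mul ih hu

lemma NN_B1R : NN B1R := by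
  intro j
  simp only [B1R, PowerSeries.coeff_mk]
  split <;> norm_num

lemma NN_HsR : NN HsR := by
  intro j
  simp only [HsR, map_add, PowerSeries.coeff_one]
  have h14 : (14 : PowerSeries ℝ) = C 14 := (map_ofNat (C (R := ℝ)) 14).symm
  rw [h14, PowerSeries.coeff_C_mul, PowerSeries.coeff_X_pow, PowerSeries.coeff_X_pow]
  split <;> split <;> split <;> norm_num

lemma coeff_mul_ge {u v : PowerSeries ℝ} (hu : NN u) (hv : NN v) (a b : ℕ) :
    PowerSeries.coeff a u * PowerSeries.coeff b v
      ≤ PowerSeries.coeff (a + b) (u * v) := by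
  rw [PowerSeries.coeff_mul]
  exact Finset.single_le_sum
    (f := fun p : ℕ × ℕ => PowerSeries.coeff p.1 u * PowerSeries.coeff p.2 v)
    (fun p _ => mul_nonneg (hu p.1) (hv p.2))
    (Finset.HasAntidiagonal.mem_antidiagonal.mpr rfl : (a, b) ∈ Finset.HasAntidiagonal.antidiagonal (a + b))

lemma posR (r M : ℕ) : (1 : ℝ) ≤ PowerSeries.coeff (4 * M + 4)
    (HsR ^ (2 - r) * B1R ^ (4 * M + 5)) := by
  have c0 : PowerSeries.coeff 0 (HsR ^ (2 - r)) = 1 := by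
    rw [PowerSeries.coeff_zero_eq_constantCoeff, map_pow]
    have : PowerSeries.constantCoeff (R := ℝ) HsR = 1 := by
      simp [HsR]
    rw [this, one_pow]
  have c1 : PowerSeries.coeff (4 * M + 4) B1R = 1 := by
    simp only [B1R, PowerSeries.coeff_mk]
    rw [if_pos (by omega)]
  have c2 : PowerSeries.coeff 0 (B1R ^ (4 * M + 4)) = 1 := by
    rw [PowerSeries.coeff_zero_eq_constantCoeff, map_pow]
    have : PowerSeries.constantCoeff (R := ℝ) B1R = 1 := by
      rw [← PowerSeries.coeff_zero_eq_constantCoeff]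
      simp [B1R, PowerSeries.coeff_mk]
    rw [this, one_pow]
  have h1 : (1 : ℝ) ≤ PowerSeries.coeff (4 * M + 4) (B1R ^ (4 * M + 5)) := by
    have := coeff_mul_ge NN_B1R (NN_pow NN_B1R (4 * M + 4)) (4 * M + 4) 0
    rw [add_zero, c1, c2, one_mul] at this
    calc (1 : ℝ) = 1 := rfl
    _ ≤ _ := by
      rw [show B1R ^ (4 * M + 5) = B1R * B1R ^ (4 * M + 4) by rw [← pow_succ']]
      exact this
  have h2 := coeff_mul_ge (NN_pow NN_HsR (2 - r)) (NN_pow NN_B1R (4 * M + 5)) 0 (4 * M + 4)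
  rw [zero_add, c0, one_mul] at h2
  exact le_trans h1 h2

lemma posC (r M : ℕ) : PowerSeries.coeff (4 * M + 4)
    (Hs ^ (2 - r) * B1 ^ (4 * M + 5)) ≠ 0 := by
  have : Hs ^ (2 - r) * B1 ^ (4 * M + 5)
      = PowerSeries.map (algebraMap ℝ ℂ) (HsR ^ (2 - r) * B1R ^ (4 * M + 5)) := by
    rw [map_mul, map_pow, map_pow, map_B1R, map_HsR]
  rw [this, PowerSeries.coeff_map]
  have := posR r M
  intro h
  rw [show algebraMap ℝ ℂ (PowerSeries.coeff (4 * M + 4)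
      (HsR ^ (2 - r) * B1R ^ (4 * M + 5))) = ((PowerSeries.coeff (4 * M + 4)
      (HsR ^ (2 - r) * B1R ^ (4 * M + 5)) : ℝ) : ℂ) from rfl] at h
  rw [Complex.ofReal_eq_zero] at h
  linarith [this, h.ge]


theorem noExtremal {ι : Type*} (E J0 r : ℕ) (hE : E = 3 * J0 + r) (hr : r < 3)
    (F : Finset ι) (c : ι → ℂ) (sv : ι → ℕ) (hs : ∀ i ∈ F, sv i ≤ J0)
    (R : PowerSeries ℂ)
    (heq : ∑ i ∈ F, C (c i) * Hs ^ (E - 3 * sv i) * Ws ^ (2 * sv i + 1)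
      = 1 + X ^ (4 * J0 + 5) * R) : False := by
  have h := congrArg (fun u => PowerSeries.coeff (4 * J0 + 7)
    (u * (X ^ 3 * Hs ^ (2 - r) * B1 ^ (4 * J0 + 5)))) heq
  simp only [Finset.sum_mul, map_sum] at h
  have hL : ∀ i ∈ F, PowerSeries.coeff (4 * J0 + 7)
      (C (c i) * Hs ^ (E - 3 * sv i) * Ws ^ (2 * sv i + 1)
        * (X ^ 3 * Hs ^ (2 - r) * B1 ^ (4 * J0 + 5))) = 0 := by
    intro i hi
    obtain ⟨k, hk⟩ : ∃ k, J0 = sv i + k := ⟨J0 - sv i, by have := hs i hi; omega⟩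
    have hexp : (E - 3 * sv i) + (2 - r) = 3 * k + 2 := by omega
    have hrw : C (c i) * Hs ^ (E - 3 * sv i) * Ws ^ (2 * sv i + 1)
        * (X ^ 3 * Hs ^ (2 - r) * B1 ^ (4 * J0 + 5))
        = C (c i) * (X ^ 3 * Ws ^ (2 * sv i + 1) * Hs ^ (3 * k + 2)
            * B1 ^ (4 * (sv i + k) + 5)) := by
      calc C (c i) * Hs ^ (E - 3 * sv i) * Ws ^ (2 * sv i + 1)
          * (X ^ 3 * Hs ^ (2 - r) * B1 ^ (4 * J0 + 5))
          = C (c i) * (X ^ 3 * Ws ^ (2 * sv i + 1)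
            * (Hs ^ (E - 3 * sv i) * Hs ^ (2 - r)) * B1 ^ (4 * J0 + 5)) := by ring
        _ = _ := by rw [← pow_add, hexp, hk]
    rw [hrw, PowerSeries.coeff_C_mul, show 4 * J0 + 7 = 4 * (sv i + k) + 7 by omega,
      kill (sv i) k, mul_zero]
  rw [Finset.sum_eq_zero hL] at h
  have hR1 : (1 + X ^ (4 * J0 + 5) * R) * (X ^ 3 * Hs ^ (2 - r) * B1 ^ (4 * J0 + 5))
      = X ^ 3 * (Hs ^ (2 - r) * B1 ^ (4 * J0 + 5))
        + X ^ (4 * J0 + 8) * (R * Hs ^ (2 - r) * B1 ^ (4 * J0 + 5)) := by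
    rw [show 4 * J0 + 8 = (4 * J0 + 5) + 3 by omega, pow_add]
    ring
  rw [hR1, map_add, show 4 * J0 + 7 = (4 * J0 + 4) + 3 by omega,
    PowerSeries.coeff_X_pow_mul _ 3 _,
    PowerSeries.coeff_X_pow_mul' _ (4 * J0 + 8) _,
    if_neg (by omega : ¬ 4 * J0 + 8 ≤ 4 * J0 + 4 + 3), add_zero] at h
  exact posC r J0 h.symm

end MSBaux
end


theorem mallows_sloane_bound_RIIminus (n d : ℕ) (A : ℕ → ℂ)
    (hA0 : A 0 = 1) (hAz : ∀ i, 0 < i → i < d → A i = 0) (hAd : A d ≠ 0)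
    (hdn : d ≤ n) (W : ℂ → ℂ → ℂ)
    (hWform : W = fun x y => ∑ i ∈ Finset.range (n + 1), A i * x ^ (n - i) * y ^ i)
    (hWmem : W ∈ Algebra.adjoin ℂ ({WH8, W12} : Set (ℂ → ℂ → ℂ)))
    (hanti : ∀ x y : ℂ,
      W ((x + y) / (Real.sqrt 2 : ℂ)) ((x - y) / (Real.sqrt 2 : ℂ)) = -W x y) :
    (d : ℤ) ≤ 4 * ⌊((n : ℚ) - 12) / 24⌋ + 4 := by
  classical
  -- √2 facts and σ-invariance of the generators
  have hs2 : ((Real.sqrt 2 : ℝ) : ℂ) ^ 2 = 2 := by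
    rw [← Complex.ofReal_pow, Real.sq_sqrt (by norm_num : (0:ℝ) ≤ 2)]
    norm_num
  have hs0 : ((Real.sqrt 2 : ℝ) : ℂ) ≠ 0 := by
    intro h; rw [h] at hs2; norm_num at hs2
  have hs4 : ((Real.sqrt 2 : ℝ) : ℂ) ^ 4 = 4 := by
    rw [show (4:ℕ) = 2*2 from rfl, pow_mul, hs2]; norm_num
  have hs8 : ((Real.sqrt 2 : ℝ) : ℂ) ^ 8 = 16 := by
    rw [show (8:ℕ) = 2*4 from rfl, pow_mul, hs2]; norm_num
  have hs12 : ((Real.sqrt 2 : ℝ) : ℂ) ^ 12 = 64 := by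
    rw [show (12:ℕ) = 2*6 from rfl, pow_mul, hs2]; norm_num
  have hσH : ∀ x y : ℂ, WH8 ((x + y) / (Real.sqrt 2 : ℂ)) ((x - y) / (Real.sqrt 2 : ℂ))
      = WH8 x y := by
    intro x y
    simp only [WH8, div_pow, hs8, hs4]
    field_simp
    ring
  have hσW : ∀ x y : ℂ, W12 ((x + y) / (Real.sqrt 2 : ℂ)) ((x - y) / (Real.sqrt 2 : ℂ))
      = -W12 x y := by
    intro x y
    simp only [W12, div_pow, hs12, hs8, hs4]
    field_simp
    ring
  -- representation of W as linear combination of monomials in the generators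
  have hWmem' : W ∈ Submodule.span ℂ
      ((Submonoid.closure ({WH8, W12} : Set (ℂ → ℂ → ℂ))) : Set (ℂ → ℂ → ℂ)) := by
    rw [← Algebra.adjoin_eq_span]
    exact hWmem
  obtain ⟨N, f, g, hWrep⟩ := Submodule.mem_span_set'.mp hWmem'
  have hgi : ∀ i : Fin N, ∃ a b : ℕ, WH8 ^ a * W12 ^ b = (g i : ℂ → ℂ → ℂ) :=
    fun i => (Submonoid.mem_closure_pair WH8 W12 _).mp (g i).2
  choose a b hab using hgi
  have hW : ∀ x y : ℂ, W x y = ∑ i : Fin N, f i * ((WH8 x y) ^ (a i) * (W12 x y) ^ (b i)) := by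
    intro x y
    rw [← hWrep, Finset.sum_apply, Finset.sum_apply]
    refine Finset.sum_congr rfl fun i _ => ?_
    rw [← hab i]
    simp [Pi.smul_apply, Pi.mul_apply, Pi.pow_apply, smul_eq_mul]
  -- scaling
  have hH8s : ∀ l t : ℂ, WH8 l (l * t) = l ^ 8 * WH8 1 t := by
    intro l t; simp only [WH8]; ring
  have hW12s : ∀ l t : ℂ, W12 l (l * t) = l ^ 12 * W12 1 t := by
    intro l t; simp only [W12]; ring
  set D : Fin N → ℕ := fun i => 8 * a i + 12 * b i with hD
  -- coefficient extraction in the scaling variable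
  have extract : ∀ (e : Fin N → ℂ) (q : ℂ),
      (∀ l : ℂ, ∑ i : Fin N, e i * l ^ (D i) = q * l ^ n) →
      (∑ i ∈ Finset.univ.filter (fun i => D i = n), e i) = q := by
    intro e q hl
    have hpq : (∑ i : Fin N, Polynomial.C (e i) * Polynomial.X ^ (D i) : Polynomial ℂ)
        = Polynomial.C q * Polynomial.X ^ n := by
      apply Polynomial.funext
      intro l
      have := hl l
      simpa [Polynomial.eval_finset_sum] using this
    have h2 := congrArg (fun p : Polynomial ℂ => p.coeff n) hpq
    simp only [Polynomial.finset_sum_coeff, Polynomial.coeff_C_mul,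
      Polynomial.coeff_X_pow, mul_ite, mul_one, mul_zero, eq_self_iff_true, if_true] at h2
    rw [← h2, Finset.sum_filter]
    refine Finset.sum_congr rfl fun i _ => ?_
    by_cases h : D i = n
    · simp [h]
    · simp [eq_comm, h]
  -- the degree-n part with only odd powers of W12 survives
  have key1 : ∀ t : ℂ, ∑ i ∈ Finset.univ.filter (fun i => D i = n),
      f i * (WH8 1 t) ^ (a i) * (W12 1 t) ^ (b i)
      = ∑ j ∈ Finset.range (n + 1), A j * t ^ j := by
    intro t
    apply extract
    intro l
    have h1 : W l (l * t) = ∑ i : Fin N,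
        f i * (WH8 1 t) ^ (a i) * (W12 1 t) ^ (b i) * l ^ (D i) := by
      rw [hW l (l * t)]
      refine Finset.sum_congr rfl fun i _ => ?_
      rw [hH8s, hW12s, mul_pow, mul_pow, ← pow_mul, ← pow_mul, hD]
      simp only []
      rw [pow_add]
      ring
    have h2 : W l (l * t) = (∑ j ∈ Finset.range (n + 1), A j * t ^ j) * l ^ n := by
      rw [hWform]
      simp only []
      rw [Finset.sum_mul]
      refine Finset.sum_congr rfl fun j hj => ?_
      have hjn : j ≤ n := by
        have := Finset.mem_range.mp hj; omega
      have hpow : l ^ (n - j) * l ^ j = l ^ n := by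
        rw [← pow_add, Nat.sub_add_cancel hjn]
      rw [mul_pow]
      linear_combination (A j * t ^ j) * hpow
    rw [← h1, h2]
  have key2 : ∀ t : ℂ, ∑ i ∈ Finset.univ.filter (fun i => D i = n),
      f i * ((-1 : ℂ) ^ (b i) + 1) * (WH8 1 t) ^ (a i) * (W12 1 t) ^ (b i) = 0 := by
    intro t
    apply extract
    intro l
    have hzero : ∀ x y : ℂ, ∑ i : Fin N,
        f i * ((-1 : ℂ) ^ (b i) + 1) * ((WH8 x y) ^ (a i) * (W12 x y) ^ (b i)) = 0 := by
      intro x y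
      have hσ := hanti x y
      rw [hW ((x + y) / (Real.sqrt 2 : ℂ)) ((x - y) / (Real.sqrt 2 : ℂ)), hW x y] at hσ
      have hσ' : ∑ i : Fin N, f i * ((-1 : ℂ) ^ (b i))
          * ((WH8 x y) ^ (a i) * (W12 x y) ^ (b i))
          = -∑ i : Fin N, f i * ((WH8 x y) ^ (a i) * (W12 x y) ^ (b i)) := by
        rw [← hσ]
        refine Finset.sum_congr rfl fun i _ => ?_
        rw [hσH, hσW, neg_pow]
        ring
      have hsplit : ∑ i : Fin N, f i * ((-1 : ℂ) ^ (b i) + 1)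
            * ((WH8 x y) ^ (a i) * (W12 x y) ^ (b i))
          = (∑ i : Fin N, f i * ((-1 : ℂ) ^ (b i))
              * ((WH8 x y) ^ (a i) * (W12 x y) ^ (b i)))
            + ∑ i : Fin N, f i * ((WH8 x y) ^ (a i) * (W12 x y) ^ (b i)) := by
        rw [← Finset.sum_add_distrib]
        exact Finset.sum_congr rfl fun i _ => by ring
      rw [hsplit, hσ']
      ring
    have h1 : (0 : ℂ) = ∑ i : Fin N,
        f i * ((-1 : ℂ) ^ (b i) + 1) * (WH8 1 t) ^ (a i) * (W12 1 t) ^ (b i) * l ^ (D i) := by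
      rw [← hzero l (l * t)]
      refine Finset.sum_congr rfl fun i _ => ?_
      rw [hH8s, hW12s, mul_pow, mul_pow, ← pow_mul, ← pow_mul, hD]
      simp only []
      rw [pow_add]
      ring
    rw [zero_mul]
    exact h1.symm
  -- keep only odd powers of W12
  have key3 : ∀ t : ℂ, ∑ i ∈ (Finset.univ.filter (fun i => D i = n)).filter
        (fun i => Odd (b i)), f i * (WH8 1 t) ^ (a i) * (W12 1 t) ^ (b i)
      = ∑ j ∈ Finset.range (n + 1), A j * t ^ j := by
    intro t
    have hsplit := Finset.sum_filter_add_sum_filter_not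
      (Finset.univ.filter (fun i => D i = n)) (fun i => Odd (b i))
      (fun i => f i * (WH8 1 t) ^ (a i) * (W12 1 t) ^ (b i))
    have heven : ∑ i ∈ (Finset.univ.filter (fun i => D i = n)).filter
        (fun i => ¬ Odd (b i)), f i * (WH8 1 t) ^ (a i) * (W12 1 t) ^ (b i) = 0 := by
      have h2 := key2 t
      rw [← Finset.sum_filter_add_sum_filter_not
        (Finset.univ.filter (fun i => D i = n)) (fun i => Odd (b i))
        (fun i => f i * ((-1 : ℂ) ^ (b i) + 1) * (WH8 1 t) ^ (a i) * (W12 1 t) ^ (b i))] at h2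
      have hodd0 : ∑ i ∈ (Finset.univ.filter (fun i => D i = n)).filter (fun i => Odd (b i)),
          f i * ((-1 : ℂ) ^ (b i) + 1) * (WH8 1 t) ^ (a i) * (W12 1 t) ^ (b i) = 0 :=
        Finset.sum_eq_zero fun i hi => by
          rw [((Finset.mem_filter.mp hi).2).neg_one_pow]; ring
      rw [hodd0, zero_add] at h2
      have h3 : ∑ i ∈ (Finset.univ.filter (fun i => D i = n)).filter (fun i => ¬ Odd (b i)),
          f i * ((-1 : ℂ) ^ (b i) + 1) * (WH8 1 t) ^ (a i) * (W12 1 t) ^ (b i)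
          = 2 * ∑ i ∈ (Finset.univ.filter (fun i => D i = n)).filter (fun i => ¬ Odd (b i)),
            f i * (WH8 1 t) ^ (a i) * (W12 1 t) ^ (b i) := by
        rw [Finset.mul_sum]
        refine Finset.sum_congr rfl fun i hi => ?_
        rw [(Nat.not_odd_iff_even.mp ((Finset.mem_filter.mp hi).2)).neg_one_pow]
        ring
      rw [h3] at h2
      rcases mul_eq_zero.mp h2 with h | h
      · norm_num at h
      · exact h
    rw [← key1 t, ← hsplit, heven, add_zero]
  -- polynomial identity in the second slice variable
  have hWH8t : ∀ t : ℂ, WH8 1 t = 1 + 14 * t ^ 4 + t ^ 8 := by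
    intro t; simp only [WH8]; ring
  have hW12t : ∀ t : ℂ, W12 1 t = 1 - 33 * t ^ 4 - 33 * t ^ 8 + t ^ 12 := by
    intro t; simp only [W12]; ring
  have pstar : (∑ j ∈ Finset.range (n + 1), Polynomial.C (A j) * Polynomial.X ^ j
        : Polynomial ℂ)
      = ∑ i ∈ (Finset.univ.filter (fun i => D i = n)).filter (fun i => Odd (b i)),
          Polynomial.C (f i)
            * (1 + Polynomial.C 14 * Polynomial.X ^ 4 + Polynomial.X ^ 8) ^ (a i)
            * (1 - Polynomial.C 33 * Polynomial.X ^ 4 - Polynomial.C 33 * Polynomial.X ^ 8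
                + Polynomial.X ^ 12) ^ (b i) := by
    apply Polynomial.funext
    intro t
    simp only [Polynomial.eval_finset_sum, Polynomial.eval_mul, Polynomial.eval_pow,
      Polynomial.eval_C, Polynomial.eval_X, Polynomial.eval_add, Polynomial.eval_sub,
      Polynomial.eval_one]
    rw [← key3 t]
    refine (Finset.sum_congr rfl fun i _ => ?_).symm
    rw [hWH8t, hW12t]
  -- coefficients of P
  have hPcoeff : ∀ j : ℕ, (∑ j ∈ Finset.range (n + 1), Polynomial.C (A j) * Polynomial.X ^ j
      : Polynomial ℂ).coeff j = if j ∈ Finset.range (n + 1) then A j else 0 := by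
    intro j
    rw [Polynomial.finset_sum_coeff]
    simp only [Polynomial.coeff_C_mul, Polynomial.coeff_X_pow, mul_ite, mul_one, mul_zero]
    exact Finset.sum_ite_eq (Finset.range (n + 1)) j A
  have hA0' : (∑ j ∈ Finset.range (n + 1), Polynomial.C (A j) * Polynomial.X ^ j
      : Polynomial ℂ).coeff 0 = 1 := by
    rw [hPcoeff, if_pos (Finset.mem_range.mpr (by omega))]
    exact hA0
  -- nonemptiness gives the structure of n
  have hFne : ((Finset.univ.filter (fun i => D i = n)).filter
      (fun i => Odd (b i))).Nonempty := by
    by_contra hne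
    rw [Finset.not_nonempty_iff_eq_empty] at hne
    rw [hne, Finset.sum_empty] at pstar
    rw [pstar] at hA0'
    simp at hA0'
  obtain ⟨i0, hi0⟩ := hFne
  have hDn : D i0 = n := (Finset.mem_filter.mp ((Finset.mem_filter.mp hi0).1)).2
  obtain ⟨s0, hs0b⟩ := (Finset.mem_filter.mp hi0).2
  have hDi0 : 8 * a i0 + 12 * b i0 = n := hDn
  have hnE : n = 12 + 8 * (a i0 + 3 * s0) := by omega
  set E : ℕ := a i0 + 3 * s0 with hE0
  set J0 : ℕ := E / 3 with hJ0
  set r : ℕ := E % 3 with hr0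
  have hE3 : E = 3 * J0 + r := by omega
  have hrlt : r < 3 := by omega
  have hfloor : ⌊((n : ℚ) - 12) / 24⌋ = (J0 : ℤ) := by
    rw [hnE]
    push_cast
    rw [show ((12 : ℚ) + 8 * (E : ℚ) - 12) / 24 = (E : ℚ) / 3 by ring]
    rw [Int.floor_eq_iff]
    constructor
    · rw [le_div_iff₀ (by norm_num : (0 : ℚ) < 3)]
      push_cast
      exact_mod_cast (by omega : (J0 * 3 : ℕ) ≤ E)
    · rw [div_lt_iff₀ (by norm_num : (0 : ℚ) < 3)]
      push_cast
      exact_mod_cast (by omega : E < (J0 + 1) * 3)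
  rw [hfloor]
  by_contra hcon
  push_neg at hcon
  have hd5 : 4 * J0 + 5 ≤ d := by
    have : (4 * (J0 : ℤ) + 4) < (d : ℤ) := hcon
    omega
  -- truncation
  have hdvd : (Polynomial.X : Polynomial ℂ) ^ (4 * J0 + 5)
      ∣ (∑ j ∈ Finset.range (n + 1), Polynomial.C (A j) * Polynomial.X ^ j
          : Polynomial ℂ) - 1 := by
    rw [Polynomial.X_pow_dvd_iff]
    intro j hj
    rw [Polynomial.coeff_sub, hPcoeff, Polynomial.coeff_one]
    rcases Nat.eq_zero_or_pos j with rfl | hjpos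
    · rw [if_pos (Finset.mem_range.mpr (by omega)), if_pos rfl, hA0, sub_self]
    · rw [if_pos (Finset.mem_range.mpr (by omega)), if_neg (by omega),
        hAz j hjpos (by omega), sub_zero]
  obtain ⟨Rp, hRp⟩ := hdvd
  -- move to power series
  have hcoe := congrArg (fun p : Polynomial ℂ => Polynomial.coeToPowerSeries.ringHom p) pstar
  simp only [map_sum, map_mul, map_pow, map_add, map_sub, map_one,
    Polynomial.coeToPowerSeries.ringHom_apply, Polynomial.coe_C, Polynomial.coe_X] at hcoe
  have hofNat14 : PowerSeries.C 14 = (14 : PowerSeries ℂ) := map_ofNat (PowerSeries.C (R := ℂ)) 14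
  have hofNat33 : PowerSeries.C 33 = (33 : PowerSeries ℂ) := map_ofNat (PowerSeries.C (R := ℂ)) 33
  rw [hofNat14, hofNat33] at hcoe
  -- hcoe : ↑P = ∑ i ∈ Fodd, C (f i) * Hs ^ (a i) * Ws ^ (b i)
  have h1 : (∑ j ∈ Finset.range (n + 1), Polynomial.C (A j) * Polynomial.X ^ j
      : Polynomial ℂ) = 1 + Polynomial.X ^ (4 * J0 + 5) * Rp := by
    linear_combination hRp
  have hcoe2 := congrArg (fun p : Polynomial ℂ => Polynomial.coeToPowerSeries.ringHom p) h1
  simp only [map_sum, map_mul, map_pow, map_add, map_sub, map_one,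
    Polynomial.coeToPowerSeries.ringHom_apply, Polynomial.coe_C, Polynomial.coe_X] at hcoe2
  have hcoe3 := hcoe.symm.trans hcoe2
  -- apply the power-series obstruction
  refine absurd rfl (fun _ : (0 : ℕ) = 0 => ?_)
  refine MSBaux.noExtremal E J0 r hE3 hrlt
    ((Finset.univ.filter (fun i => D i = n)).filter (fun i => Odd (b i))) f
    (fun i => b i / 2) ?_ (Rp : PowerSeries ℂ) ?_
  · intro i hi
    show b i / 2 ≤ J0
    have hDi : 8 * a i + 12 * b i = n := (Finset.mem_filter.mp ((Finset.mem_filter.mp hi).1)).2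
    obtain ⟨si, hsi⟩ := (Finset.mem_filter.mp hi).2
    omega
  · rw [← hcoe3]
    refine Finset.sum_congr rfl fun i hi => ?_
    have hDi : 8 * a i + 12 * b i = n := (Finset.mem_filter.mp ((Finset.mem_filter.mp hi).1)).2
    obtain ⟨si, hsi⟩ := (Finset.mem_filter.mp hi).2
    rw [show E - 3 * (b i / 2) = a i by omega, show 2 * (b i / 2) + 1 = b i by omega]
    simp only [MSBaux.Hs, MSBaux.Ws]
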